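/- In an elementary topos, for every object A the exponential Ω^A is injective, and the singleton map {·} : A → Ω^A is a monomorphism; hence every object embeds into an injective object. -/

import Mathlib

open CategoryTheory CategoryTheory.Limits MonoidalCategory CartesianClosed

universe u v

section Aux

variable {C : Type u} [Category.{v} C]

lemma aux_mono_whiskerLeft [CartesianMonoidalCategory C] (A : C) {X Y : C} (m : X ⟶ Y) [Mono m] :
    Mono (A ◁ m) := by
  constructor
  intro T a b h
  apply CartesianMonoidalCategory.hom_ext
  · have := congrArg (· ≫ CartesianMonoidalCategory.fst A Y) h
    simpa [CartesianMonoidalCategory.whiskerLeft_fst] using this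
  · have := congrArg (· ≫ CartesianMonoidalCategory.snd A Y) h
    simp only [Category.assoc, CartesianMonoidalCategory.whiskerLeft_snd] at this
    rw [← Category.assoc, ← Category.assoc] at this
    exact cancel_mono m |>.mp this

/-- If the big square `(s ≫ k, p, χ, t)` is a pullback and `k` is mono, then
`(s, p, k ≫ χ, t)` is a pullback. -/
lemma aux_isPullback_comp_mono {W X Y T Z : C} {s : W ⟶ X} {k : X ⟶ Y} [Mono k]
    {p : W ⟶ T} {χ : Y ⟶ Z} {t : T ⟶ Z} (big : IsPullback (s ≫ k) p χ t) :
    IsPullback s p (k ≫ χ) t := by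
  have comm : s ≫ k ≫ χ = p ≫ t := by rw [← Category.assoc]; exact big.w
  have wcond : ∀ c : PullbackCone (k ≫ χ) t, (c.fst ≫ k) ≫ χ = c.snd ≫ t := fun c => by
    rw [Category.assoc]; exact c.condition
  exact IsPullback.of_isLimit (PullbackCone.IsLimit.mk comm
    (fun c => big.lift (c.fst ≫ k) c.snd (wcond c))
    (fun c => by
      have h1 : (big.lift (c.fst ≫ k) c.snd (wcond c) ≫ s) ≫ k = c.fst ≫ k := by
        rw [Category.assoc]; exact big.lift_fst _ _ _
      exact (cancel_mono k).mp h1)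
    (fun c => big.lift_snd _ _ _)
    (fun c m h1 h2 => by
      apply big.hom_ext
      · rw [big.lift_fst, ← Category.assoc, h1]
      · rw [big.lift_snd, h2]))

end Aux

theorem omega_power_injective_and_singleton_mono
    {C : Type u} [Category.{v} C] [HasFiniteLimits C] [CartesianMonoidalCategory C]
    [MonoidalClosed C]
    (Ω : C) (truth : ⊤_ C ⟶ Ω)
    (classifies : ∀ {U X : C} (m : U ⟶ X), Mono m →
      ∃! χ : X ⟶ Ω, IsPullback m (terminal.from U) χ truth)
    (A : C) :
    Injective (A ⟹ Ω) ∧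
      Mono (MonoidalClosed.curry
        (classifies (CartesianMonoidalCategory.lift (𝟙 A) (𝟙 A))
          inferInstance).choose) := by
  have htruthMono : Mono truth := by
    refine ⟨fun a b h => ?_⟩
    apply Subsingleton.elim
  constructor
  · -- Injectivity of `A ⟹ Ω`
    constructor
    intro X Y f m hm
    -- uncurry f : A ⊗ X ⟶ Ω
    set h := MonoidalClosed.uncurry f with hh
    -- the subobject classified by h : pullback of truth along h
    let S := pullback truth h
    let s : S ⟶ A ⊗ X := pullback.snd truth h
    have hsMono : Mono s := inferInstance
    have hPB : IsPullback s (terminal.from S) h truth := by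
      have := (IsPullback.of_hasPullback truth h).flip
      convert this using 1
      apply Subsingleton.elim
    -- h is the unique classifying map of s
    obtain ⟨χ₀, hχ₀, huniq₀⟩ := classifies s hsMono
    have hh_eq : h = χ₀ := huniq₀ h hPB
    -- s followed by A ◁ m is a mono into A ⊗ Y
    have hwm : Mono (A ◁ m) := aux_mono_whiskerLeft A m
    have hsm : Mono (s ≫ A ◁ m) := mono_comp _ _
    obtain ⟨χ, hχ, huniq⟩ := classifies (s ≫ A ◁ m) hsm
    -- (A ◁ m) ≫ χ also classifies s, hence equals h
    have hPB2 : IsPullback s (terminal.from S) (A ◁ m ≫ χ) truth :=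
      aux_isPullback_comp_mono hχ
    have key : A ◁ m ≫ χ = h := by
      rw [hh_eq]
      exact huniq₀ _ hPB2
    refine ⟨MonoidalClosed.curry χ, ?_⟩
    rw [← MonoidalClosed.curry_natural_left, key, hh, MonoidalClosed.curry_uncurry]
  · -- the singleton map is mono
    set Δ := CartesianMonoidalCategory.lift (𝟙 A) (𝟙 A) with hΔ
    set χΔ := (classifies Δ inferInstance).choose with hχΔ
    have hspec : IsPullback Δ (terminal.from A) χΔ truth :=
      (classifies Δ inferInstance).choose_spec.1
    refine ⟨fun {T} u v huv => ?_⟩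
    -- from equality of curried maps, get equality after whiskering
    have h1 : A ◁ u ≫ χΔ = A ◁ v ≫ χΔ := by
      have := congrArg MonoidalClosed.uncurry huv
      rwa [MonoidalClosed.uncurry_natural_left, MonoidalClosed.uncurry_natural_left,
        MonoidalClosed.uncurry_curry] at this
    -- evaluate at the "point" ⟨v, id⟩ : T ⟶ A ⊗ T
    let p : T ⟶ A ⊗ T := CartesianMonoidalCategory.lift v (𝟙 T)
    have hpv : p ≫ A ◁ v = CartesianMonoidalCategory.lift v v := by
      apply CartesianMonoidalCategory.hom_ext <;>
        simp [p, CartesianMonoidalCategory.whiskerLeft_fst, CartesianMonoidalCategory.whiskerLeft_snd]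
    have hpu : p ≫ A ◁ u = CartesianMonoidalCategory.lift v u := by
      apply CartesianMonoidalCategory.hom_ext <;>
        simp [p, CartesianMonoidalCategory.whiskerLeft_fst, CartesianMonoidalCategory.whiskerLeft_snd]
    have hvv : CartesianMonoidalCategory.lift v v = v ≫ Δ := by
      apply CartesianMonoidalCategory.hom_ext <;> simp [hΔ]
    -- lift v u ≫ χΔ = true
    have h2 : CartesianMonoidalCategory.lift v u ≫ χΔ = terminal.from T ≫ truth := by
      rw [← hpu, Category.assoc, h1, ← Category.assoc, hpv, hvv, Category.assoc, hspec.w,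
        ← Category.assoc]
      congr 1
      apply Subsingleton.elim
    -- factor through the pullback
    let l : T ⟶ A := hspec.lift (CartesianMonoidalCategory.lift v u) (terminal.from T) h2
    have hl1 : l ≫ Δ = CartesianMonoidalCategory.lift v u := hspec.lift_fst _ _ _
    have hlv : l = v := by
      have h3 := congrArg (· ≫ CartesianMonoidalCategory.fst A A) hl1
      simp only [IsPullback.cone_fst, hΔ, Category.assoc, CartesianMonoidalCategory.lift_fst] at h3
      rw [Category.comp_id] at h3
      exact h3
    have hlu : l = u := by
      have h3 := congrArg (· ≫ CartesianMonoidalCategory.snd A A) hl1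
      simp only [IsPullback.cone_fst, hΔ, Category.assoc, CartesianMonoidalCategory.lift_snd] at h3
      rw [Category.comp_id] at h3
      exact h3
    rw [← hlv, hlu]
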